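/- Commutator dichotomy for Pauli strings: for any n-qubit Pauli strings p and q, either P(p) * P(q) = P(q) * P(p), in which case ⁅Complex.I • P(p), Complex.I • P(q)⁆ = 0, or P(p) * P(q) = −P(q) * P(p), in which case there exist an n-qubit Pauli string r and a sign ε ∈ {1, −1} such that ⁅Complex.I • P(p), Complex.I • P(q)⁆ = (2·ε) • (Complex.I • P(r)). -/

import Mathlib

open Matrix

attribute [local instance 100] LieRing.ofAssociativeRing

/-- The four 2×2 Pauli matrices: identity, X, Y, Z. -/
noncomputable def pauli : Fin 4 → Matrix (Fin 2) (Fin 2) ℂ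
  | 0 => 1
  | 1 => !![0, 1; 1, 0]
  | 2 => !![0, -Complex.I; Complex.I, 0]
  | 3 => !![1, 0; 0, -1]

/-- The matrix of an `n`-qubit Pauli string `p : Fin n → Fin 4`,
the Kronecker product of the `pauli (p i)`. -/
noncomputable def PauliMat {n : ℕ} (p : Fin n → Fin 4) :
    Matrix (Fin n → Fin 2) (Fin n → Fin 2) ℂ :=
  Matrix.of fun x y => ∏ i, pauli (p i) (x i) (y i)

/-- The Hamiltonian algebra of a set of Pauli strings: the Lie ℝ-subalgebra of the
complex matrices generated by `{I • P(p) : p ∈ S}`. -/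
noncomputable def hamAlg {n : ℕ} (S : Set (Fin n → Fin 4)) :
    LieSubalgebra ℝ (Matrix (Fin n → Fin 2) (Fin n → Fin 2) ℂ) :=
  LieSubalgebra.lieSpan ℝ _ ((fun p => Complex.I • PauliMat p) '' S)

/-- The Pauli string `→A_iB_j`: letter `A` at `i`, letter `B` at `j`, `Z` strictly
between `i` and `j`, identity elsewhere. -/
def ladderString {n : ℕ} (i j : Fin n) (A B : Fin 4) : Fin n → Fin 4 :=
  fun k => if k = i then A else if k = j then B
    else if min i j < k ∧ k < max i j then 3 else 0

/-- The Pauli string `Z_kZ_l`. -/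
def zzString {n : ℕ} (k l : Fin n) : Fin n → Fin 4 :=
  fun m => if m = k ∨ m = l then 3 else 0

/-- The Pauli string `Z_k`. -/
def zString {n : ℕ} (k : Fin n) : Fin n → Fin 4 :=
  fun m => if m = k then 3 else 0

/-- A choice of letter: `X` if `c = 0`, `Y` if `c = 1`. -/
def ltr (c : Fin 2) : Fin 4 := if c = 0 then 1 else 2

/-- The opposite letter: `Y` if `c = 0`, `X` if `c = 1`. -/
def ltrBar (c : Fin 2) : Fin 4 := if c = 0 then 2 else 1

/-- Pauli strings of the Jordan–Wigner transformed hopping terms of one spin species,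
with sites embedded via `v : Fin N → Fin (2N)` and hoppings on the edges of `G`. -/
def Sspin {N : ℕ} (G : SimpleGraph (Fin N)) (v : Fin N → Fin (2 * N)) :
    Set (Fin (2 * N) → Fin 4) :=
  {p | ∃ k l : Fin N, G.Adj k l ∧
    (p = ladderString (v k) (v l) 1 1 ∨ p = ladderString (v k) (v l) 2 2)}

/-- Pauli strings of the Jordan–Wigner transformed free fermion model. -/
def Sfree {N : ℕ} (G : SimpleGraph (Fin N)) (u d : Fin N → Fin (2 * N)) :
    Set (Fin (2 * N) → Fin 4) :=
  Sspin G u ∪ Sspin G d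

/-- Pauli strings of the model with a single on-site Coulomb interaction at fermion
site `i0` (interaction term `Z_{u i0} Z_{d i0}`). -/
def Sint {N : ℕ} (G : SimpleGraph (Fin N)) (u d : Fin N → Fin (2 * N)) (i0 : Fin N) :
    Set (Fin (2 * N) → Fin 4) :=
  Sfree G u d ∪ {zzString (u i0) (d i0)}

def mmP : Fin 4 → Fin 4 → Fin 4 :=
  fun a b => ![![0,1,2,3],![1,0,3,2],![2,3,0,1],![3,2,1,0]] a b

noncomputable def cphP : Fin 4 → Fin 4 → ℂ :=
  fun a b => ![![1,1,1,1],![1,1,Complex.I,-Complex.I],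
    ![1,-Complex.I,1,Complex.I],![1,Complex.I,-Complex.I,1]] a b

lemma pauli_mul (a b : Fin 4) : pauli a * pauli b = cphP a b • pauli (mmP a b) := by
  fin_cases a <;> fin_cases b <;>
    simp only [pauli, cphP, mmP] <;>
    ext i j <;> fin_cases i <;> fin_cases j <;>
    simp [Matrix.mul_apply, Fin.sum_univ_two, Complex.I_mul_I, Matrix.vecHead, Matrix.vecTail] <;> ring

lemma mmP_comm (a b : Fin 4) : mmP a b = mmP b a := by fin_cases a <;> fin_cases b <;> rfl

lemma cphP_cases (a b : Fin 4) :
    (cphP b a = cphP a b ∧ cphP a b ^ 2 = 1) ∨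
    (cphP b a = -cphP a b ∧ cphP a b ^ 2 = -1) := by
  fin_cases a <;> fin_cases b <;> simp [cphP, Matrix.vecHead, Matrix.vecTail] <;> ring_nf <;> simp [Complex.I_sq]

lemma PauliMat_mul {n : ℕ} (p q : Fin n → Fin 4) :
    PauliMat p * PauliMat q
      = (∏ i, cphP (p i) (q i)) • PauliMat (fun i => mmP (p i) (q i)) := by
  ext x y
  simp only [Matrix.mul_apply, PauliMat, Matrix.smul_apply, Matrix.of_apply, smul_eq_mul]
  calc ∑ z : Fin n → Fin 2, (∏ i, pauli (p i) (x i) (z i)) * ∏ i, pauli (q i) (z i) (y i)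
      = ∑ z : Fin n → Fin 2, ∏ i, pauli (p i) (x i) (z i) * pauli (q i) (z i) (y i) := by
        simp [Finset.prod_mul_distrib]
    _ = ∏ i, ∑ t : Fin 2, pauli (p i) (x i) t * pauli (q i) t (y i) := by
        rw [Fintype.prod_sum]
    _ = ∏ i, (pauli (p i) * pauli (q i)) (x i) (y i) := by
        simp [Matrix.mul_apply]
    _ = (∏ i, cphP (p i) (q i)) * ∏ i, pauli (mmP (p i) (q i)) (x i) (y i) := by
        simp [pauli_mul, Finset.prod_mul_distrib]

lemma cphP_mul_swap (a b : Fin 4) : cphP a b * cphP b a = 1 := by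
  fin_cases a <;> fin_cases b <;>
    simp [cphP, Matrix.vecHead, Matrix.vecTail, Complex.I_mul_I]


/-- Commutator dichotomy for Pauli strings: two Pauli strings either commute (and then
the bracket vanishes) or anticommute (and then the bracket is `±2` times `I` times
another Pauli string). -/
theorem pauliMat_commute_or_anticommute {n : ℕ} (p q : Fin n → Fin 4) :
    (PauliMat p * PauliMat q = PauliMat q * PauliMat p ∧
      ⁅Complex.I • PauliMat p, Complex.I • PauliMat q⁆ = 0) ∨
    (PauliMat p * PauliMat q = -(PauliMat q * PauliMat p) ∧
      ∃ (r : Fin n → Fin 4) (ε : ℝ), (ε = 1 ∨ ε = -1) ∧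
        ⁅Complex.I • PauliMat p, Complex.I • PauliMat q⁆ =
          (2 * ε) • (Complex.I • PauliMat r)) := by
  
  have hpq := PauliMat_mul p q
  have hqp := PauliMat_mul q p
  have hmm : (fun i => mmP (q i) (p i)) = fun i => mmP (p i) (q i) := by
    funext i; exact mmP_comm _ _
  rw [hmm] at hqp
  set C : ℂ := ∏ i, cphP (p i) (q i) with hC
  set D : ℂ := ∏ i, cphP (q i) (p i) with hD
  have hDC : D * C = 1 := by
    rw [hD, hC, ← Finset.prod_mul_distrib]
    exact Finset.prod_eq_one fun i _ => cphP_mul_swap (q i) (p i)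
  have hC2 : C ^ 2 = 1 ∨ C ^ 2 = -1 := by
    rw [hC, ← Finset.prod_pow]
    refine Finset.prod_induction _ (fun x => x = 1 ∨ x = -1) ?_ (Or.inl rfl) ?_
    · rintro a b (rfl | rfl) (rfl | rfl) <;> simp
    · intro i _
      rcases cphP_cases (p i) (q i) with ⟨_, h⟩ | ⟨_, h⟩
      · exact Or.inl h
      · exact Or.inr h
  have lie_eq : ⁅Complex.I • PauliMat p, Complex.I • PauliMat q⁆
      = -(PauliMat p * PauliMat q - PauliMat q * PauliMat p) := by
    rw [Ring.lie_def]
    simp only [Matrix.smul_mul, Matrix.mul_smul, smul_smul, Complex.I_mul_I]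
    rw [← smul_sub]
    simp
  rcases hC2 with h1 | h1
  · have hDeq : D = C := by
      have h2 : D * C * C = C := by rw [hDC, one_mul]
      rwa [mul_assoc, ← sq, h1, mul_one] at h2
    left
    have hcm : PauliMat p * PauliMat q = PauliMat q * PauliMat p := by
      rw [hpq, hqp, hDeq]
    exact ⟨hcm, by rw [lie_eq, hcm, sub_self, neg_zero]⟩
  · have hDeq : D = -C := by
      have h2 : D * C * C = C := by rw [hDC, one_mul]
      rw [mul_assoc, ← sq, h1, mul_neg_one] at h2
      linear_combination -h2
    right
    have hac : PauliMat p * PauliMat q = -(PauliMat q * PauliMat p) := by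
      rw [hpq, hqp, hDeq]; simp
    refine ⟨hac, fun i => mmP (p i) (q i), ?_⟩
    have hCI : C = Complex.I ∨ C = -Complex.I := by
      have h0 : (C - Complex.I) * (C + Complex.I) = 0 := by
        linear_combination h1 - Complex.I_sq
      rcases mul_eq_zero.mp h0 with h | h
      · exact Or.inl (sub_eq_zero.mp h)
      · exact Or.inr (eq_neg_of_add_eq_zero_left h)
    have hsm : ∀ (t : ℝ) (M : Matrix (Fin n → Fin 2) (Fin n → Fin 2) ℂ),
        t • (Complex.I • M) = ((t : ℂ) * Complex.I) • M := by
      intro t M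
      rw [mul_smul, ← Complex.coe_algebraMap, algebraMap_smul]
    rcases hCI with hc | hc
    · refine ⟨-1, Or.inr rfl, ?_⟩
      rw [lie_eq, hpq, hqp, hDeq, hc, hsm, ← sub_smul, ← neg_smul]
      push_cast
      congr 1
      ring
    · refine ⟨1, Or.inl rfl, ?_⟩
      rw [lie_eq, hpq, hqp, hDeq, hc, hsm, ← sub_smul, ← neg_smul]
      push_cast
      congr 1
      ring
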